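/- The self-referential preference default theory with ι = Fin 2, form 0 = (1 < 0) (i.e. the atomic sentence R(c_1, c_0)) and form 1 = (0 < 1) (i.e. R(c_0, c_1)) has no preferred extension: there is no set E of L-sentences with E ∈ Ext(E) that arises as an extension of this theory. -/

import Mathlib

open FirstOrder Language

namespace Brevis

/-- The base language with a single binary relation symbol `R`. -/
def baseLang : Language where
  Functions := fun _ => Empty
  Relations := fun n => match n with
    | 2 => Unit
    | _ => Empty

/-- The binary relation symbol `R` of `baseLang`. -/
def Rsym : baseLang.Relations 2 := Unit.unit

/-- The base language with a binary relation symbol `R` and one 0-ary relation symbol `P`. -/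
def baseLangP : Language where
  Functions := fun _ => Empty
  Relations := fun n => match n with
    | 0 => Unit
    | 2 => Unit
    | _ => Empty

/-- The binary relation symbol `R` of `baseLangP`. -/
def RsymP : baseLangP.Relations 2 := Unit.unit

/-- The 0-ary relation symbol `P` of `baseLangP`. -/
def Psym : baseLangP.Relations 0 := Unit.unit

/-- The atomic sentence `p` given by the propositional symbol `P`. -/
def pSent (ι : Type) : (baseLangP[[ι]]).Sentence :=
  Relations.formula (Sum.inl Psym) ![]

variable (L₀ : FirstOrder.Language.{0, 0}) (R : L₀.Relations 2) (ι : Type) [Fintype ι]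

/-- The atomic sentence `d < d'`, i.e. `R (c_d) (c_d')`. -/
def ltSent (d d' : ι) : (L₀[[ι]]).Sentence :=
  Relations.boundedFormula₂ (Sum.inl R) (L₀.con d).term (L₀.con d').term

/-- The theory `SPO` asserting that `R` is a strict partial order (irreflexive and transitive). -/
def spo : (L₀[[ι]]).Theory :=
  {Relations.irreflexive (Sum.inl R), Relations.transitive (Sum.inl R)}

/-- A set of sentences is consistent iff together with `SPO` it is satisfiable. -/
def Consistent (S : (L₀[[ι]]).Theory) : Prop :=
  Theory.IsSatisfiable (S ∪ spo L₀ R ι)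

open scoped Classical in
/-- The extension base `B(e)` determined by the linear order `e` on the names. -/
noncomputable def base (e : LinearOrder ι) (form : ι → (L₀[[ι]]).Sentence) :
    (L₀[[ι]]).Theory :=
  letI := e
  (Finset.univ.sort (· ≤ · : ι → ι → Prop)).foldl
    (fun B d => if Consistent L₀ R ι (B ∪ {form d}) then B ∪ {form d} else B) ∅

/-- The deductive closure (modulo `SPO`) of a set of sentences:
all sentences satisfied in every model of `S ∪ SPO`. -/
def closure (S : (L₀[[ι]]).Theory) : Set (L₀[[ι]]).Sentence :=
  {φ | (S ∪ spo L₀ R ι) ⊨ᵇ φ}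

/-- The extension `E(e)` generated by the linear order `e`. -/
noncomputable def extension (e : LinearOrder ι) (form : ι → (L₀[[ι]]).Sentence) :
    Set (L₀[[ι]]).Sentence :=
  closure L₀ R ι (base L₀ R ι e form)

/-- A strict partial order `p` on the names is compatible with `S` iff
`S ∪ SPO ∪ {d < d' | p d d'} ∪ {¬ (d < d') | ¬ p d d'}` is satisfiable. -/
def Compatible (p : ι → ι → Prop) (S : (L₀[[ι]]).Theory) : Prop :=
  Theory.IsSatisfiable
    (S ∪ spo L₀ R ι ∪ {φ | ∃ d d', p d d' ∧ φ = ltSent L₀ R ι d d'} ∪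
      {φ | ∃ d d', ¬ p d d' ∧ φ = ∼(ltSent L₀ R ι d d')})

/-- `Exts form S`: the set of extensions `E(e)` where `e` is a linear order extending some
strict partial order compatible with `S`. -/
def Exts (form : ι → (L₀[[ι]]).Sentence) (S : (L₀[[ι]]).Theory) :
    Set (Set (L₀[[ι]]).Sentence) :=
  {E | ∃ (e : LinearOrder ι) (p : ι → ι → Prop), IsStrictOrder ι p ∧
    Compatible L₀ R ι p S ∧ (∀ d d', p d d' → e.lt d d') ∧ E = extension L₀ R ι e form}

/-- The operator `C`. -/
def C (form : ι → (L₀[[ι]]).Sentence) (S : (L₀[[ι]]).Theory) : (L₀[[ι]]).Theory :=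
  ⋂₀ Exts L₀ R ι form S

/-- The least fixed point of `C` (Knaster–Tarski): the set of accepted conclusions. -/
def lfpC (form : ι → (L₀[[ι]]).Sentence) : (L₀[[ι]]).Theory :=
  sInf {S | C L₀ R ι form S ⊆ S}



section Aux

/-- Abbreviation for the atomic sentence `c < d` in our concrete language. -/
noncomputable abbrev lt2 (c d : Fin 2) : (baseLang[[Fin 2]]).Sentence :=
  ltSent baseLang Rsym (Fin 2) c d

/-- The `baseLang`-structure on `Fin 2` whose relation holds exactly of the pair `(a, b)`. -/
def bstr (a b : Fin 2) : baseLang.Structure (Fin 2) where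
  funMap := fun f _ => f.elim
  RelMap := fun {n} r x => match n, r, x with
    | 2, _, x => x 0 = a ∧ x 1 = b

/-- The corresponding structure for the language with constants, interpreted by `id`. -/
noncomputable def Mstr (a b : Fin 2) : (baseLang[[Fin 2]]).Structure (Fin 2) :=
  letI := bstr a b
  letI : (constantsOn (Fin 2)).Structure (Fin 2) := constantsOn.structure id
  Language.withConstantsStructure baseLang (Fin 2)

lemma realize_lt_Mstr (a b c d : Fin 2) :
    letI := Mstr a b
    (lt2 c d).Realize (Fin 2) ↔ (c = a ∧ d = b) := by
  letI := Mstr a b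
  simp only [ltSent, Sentence.Realize, Formula.Realize, BoundedFormula.realize_rel₂,
    Term.realize_constants]
  exact Iff.rfl

lemma Mstr_model_spo (a b : Fin 2) (h : a ≠ b) :
    letI := Mstr a b
    (Fin 2) ⊨ spo baseLang Rsym (Fin 2) := by
  letI := Mstr a b
  rw [Theory.model_iff]
  intro φ hφ
  rcases hφ with hφ | hφ
  · subst hφ
    refine Relations.realize_irreflexive.2 ⟨?_⟩
    intro z hz
    have hz' : z = a ∧ z = b := hz
    exact h (hz'.1.symm.trans hz'.2)
  · rw [Set.mem_singleton_iff] at hφ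
    subst hφ
    refine Relations.realize_transitive.2 ⟨?_⟩
    intro u v w h1 h2
    have h1' : u = a ∧ v = b := h1
    have h2' : v = a ∧ w = b := h2
    exact absurd (h1'.2.symm.trans h2'.1) (Ne.symm h)

lemma consistent_single (c d : Fin 2) (h : c ≠ d) :
    Consistent baseLang Rsym (Fin 2) {lt2 c d} := by
  unfold Consistent
  letI := Mstr c d
  haveI : (Fin 2) ⊨ ({lt2 c d} : (baseLang[[Fin 2]]).Theory) ∪ spo baseLang Rsym (Fin 2) := by
    rw [Theory.model_union_iff]
    refine ⟨?_, Mstr_model_spo c d h⟩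
    rw [Theory.model_singleton_iff]
    exact (realize_lt_Mstr c d c d).2 ⟨rfl, rfl⟩
  exact Theory.Model.isSatisfiable (Fin 2)

lemma unsat_of_both {c d : Fin 2} (T : (baseLang[[Fin 2]]).Theory)
    (hT : spo baseLang Rsym (Fin 2) ⊆ T) (h1 : lt2 c d ∈ T) (h2 : lt2 d c ∈ T) :
    ¬ T.IsSatisfiable := by
  rintro ⟨N⟩
  have r1 : N ⊨ lt2 c d := T.realize_sentence_of_mem h1
  have r2 : N ⊨ lt2 d c := T.realize_sentence_of_mem h2
  have rt : N ⊨ (Relations.transitive (Sum.inl Rsym : (baseLang[[Fin 2]]).Relations 2) :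
      (baseLang[[Fin 2]]).Sentence) :=
    T.realize_sentence_of_mem (hT (by right; rfl))
  have ri : N ⊨ (Relations.irreflexive (Sum.inl Rsym : (baseLang[[Fin 2]]).Relations 2) :
      (baseLang[[Fin 2]]).Sentence) :=
    T.realize_sentence_of_mem (hT (by left; rfl))
  replace rt := Relations.realize_transitive.1 rt
  replace ri := Relations.realize_irreflexive.1 ri
  simp only [ltSent, Sentence.Realize, Formula.Realize, BoundedFormula.realize_rel₂] at r1 r2
  erw [BoundedFormula.realize_rel₂] at r1 r2
  exact ri.irrefl _ (rt.trans _ _ _ r1 r2)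

lemma no_model_of_mem_not_mem {T : (baseLang[[Fin 2]]).Theory} (φ : (baseLang[[Fin 2]]).Sentence)
    (h1 : φ ∈ T) (h2 : ∼φ ∈ T) : ¬ T.IsSatisfiable := by
  rintro ⟨N⟩
  have r1 : N ⊨ φ := T.realize_sentence_of_mem h1
  have r2 : N ⊨ ∼φ := T.realize_sentence_of_mem h2
  rw [Sentence.realize_not] at r2
  exact r2 r1

lemma sort_two (e : LinearOrder ι) (h : Fintype.card ι = 2) :
    ∃ x y : ι, x ≠ y ∧ e.lt x y ∧
      (letI := e; (Finset.univ : Finset ι).sort (· ≤ · : ι → ι → Prop) = [x, y]) := by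
  letI := e
  obtain ⟨x, y, hxy⟩ := List.length_eq_two.mp
    (show ((Finset.univ : Finset ι).sort (· ≤ ·)).length = 2 by
      rw [Finset.length_sort, Finset.card_univ, h])
  have hnd := Finset.sort_nodup (Finset.univ : Finset ι) (· ≤ · : ι → ι → Prop)
  have hs := Finset.pairwise_sort (Finset.univ : Finset ι) (· ≤ · : ι → ι → Prop)
  rw [hxy] at hnd hs
  have hne : x ≠ y := by simp at hnd; tauto
  have hle : x ≤ y := by simp at hs; tauto
  exact ⟨x, y, hne, lt_of_le_of_ne hle hne, hxy⟩

open scoped Classical in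
lemma base_two (e : LinearOrder ι) (h : Fintype.card ι = 2)
    (form : ι → (L₀[[ι]]).Sentence)
    (hc : ∀ x : ι, Consistent L₀ R ι (∅ ∪ {form x}))
    (hic : ∀ x y : ι, x ≠ y → ¬ Consistent L₀ R ι ((∅ ∪ {form x}) ∪ {form y})) :
    ∃ x y : ι, x ≠ y ∧ e.lt x y ∧ base L₀ R ι e form = {form x} := by
  obtain ⟨x, y, hne, hlt, hsort⟩ := sort_two ι e h
  refine ⟨x, y, hne, hlt, ?_⟩
  unfold base
  rw [hsort]
  simp only [List.foldl]
  have h1 : (if Consistent L₀ R ι (∅ ∪ {form x}) then (∅ ∪ {form x} : (L₀[[ι]]).Theory) else ∅)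
      = ∅ ∪ {form x} := if_pos (hc x)
  rw [h1, if_neg (hic x y hne), Set.empty_union]

end Aux

/-- The self-referential theory `d₁ : d₂ < d₁`, `d₂ : d₁ < d₂` has no preferred extension. -/
theorem no_preferred_extension :
    ¬ ∃ E : (baseLang[[Fin 2]]).Theory,
        E ∈ Exts baseLang Rsym (Fin 2)
          ![ltSent baseLang Rsym (Fin 2) 1 0, ltSent baseLang Rsym (Fin 2) 0 1] E := by
  rintro ⟨E, e, p, hso, hcompat, hext, hE⟩
  set form : Fin 2 → (baseLang[[Fin 2]]).Sentence :=
    ![ltSent baseLang Rsym (Fin 2) 1 0, ltSent baseLang Rsym (Fin 2) 0 1] with hformdef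
  have hform : ∀ x y : Fin 2, x ≠ y → form x = lt2 y x := by
    intro x y hxy
    fin_cases x <;> fin_cases y <;> first | exact absurd rfl hxy | rfl
  have hc : ∀ x : Fin 2, Consistent baseLang Rsym (Fin 2) (∅ ∪ {form x}) := by
    intro x
    rw [Set.empty_union]
    have hx : x = 0 ∨ x = 1 := by fin_cases x <;> simp
    rcases hx with rfl | rfl
    · rw [hform 0 1 (by decide)]; exact consistent_single 1 0 (by decide)
    · rw [hform 1 0 (by decide)]; exact consistent_single 0 1 (by decide)
  have hic : ∀ x y : Fin 2, x ≠ y →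
      ¬ Consistent baseLang Rsym (Fin 2) ((∅ ∪ {form x}) ∪ {form y}) := by
    intro x y hxy
    unfold Consistent
    apply unsat_of_both (c := y) (d := x)
    · exact Set.subset_union_right
    · left; left; rw [hform x y hxy]; right; rfl
    · left; right; rw [hform y x (Ne.symm hxy)]; rfl
  obtain ⟨x, y, hne, hlt, hbase⟩ :=
    base_two baseLang Rsym (Fin 2) e (by simp) form hc hic
  have hmem : lt2 y x ∈ extension baseLang Rsym (Fin 2) e form := by
    unfold extension closure
    apply Theory.models_sentence_of_mem
    left
    rw [hbase, hform x y hne]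
    rfl
  rw [← hE] at hmem
  have hpyx : p y x := by
    by_contra hp
    exact no_model_of_mem_not_mem (lt2 y x) (Or.inl (Or.inl (Or.inl hmem)))
      (Or.inr ⟨y, x, hp, rfl⟩) hcompat
  exact absurd (hext y x hpyx)
    (@lt_asymm _ (@PartialOrder.toPreorder _ (@LinearOrder.toPartialOrder _ e)) x y hlt)

end Brevis
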